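/- Let G = (V,E) be a finite simple graph and for each edge e ∈ E let k_e be a positive integer. Let G' be the even subdivision of G in which every edge e = {u,v} is replaced by a path u — w^e_1 — w^e_2 — ⋯ — w^e_{2k_e} — v through 2k_e new vertices. Then α(G') = α(G) + Σ_{e∈E} k_e. -/

import Mathlib

open scoped Classical

/-- The independence number `α(G)`: the maximum size of an independent set. -/
noncomputable def indepNum {V : Type*} [Fintype V] (G : SimpleGraph V) : ℕ :=
  Finset.sup
    (Finset.univ.filter fun S : Finset V => ∀ u ∈ S, ∀ v ∈ S, ¬ G.Adj u v)
    Finset.card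

/-- The even subdivision of `G`: every edge `e = {fst e, snd e}` is replaced by a
path `fst e — w^e_0 — w^e_1 — ⋯ — w^e_{2k_e - 1} — snd e` through `2 * k e` new
vertices (the new vertices for edge `e` being `Sum.inr ⟨e, i⟩` for `i : Fin (2 * k e)`);
in particular the original edge itself is removed. Here `fst, snd : G.edgeSet → V`
is any choice of orientation of the edges of `G`. -/
def evenSubdivision {V : Type*} (G : SimpleGraph V) (k : Sym2 V → ℕ)
    (fst snd : G.edgeSet → V) :
    SimpleGraph (V ⊕ Σ e : G.edgeSet, Fin (2 * k e)) :=
  SimpleGraph.fromRel fun a b =>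
    (∃ (e : G.edgeSet) (i : Fin (2 * k e)), (i : ℕ) = 0 ∧
        a = Sum.inl (fst e) ∧ b = Sum.inr ⟨e, i⟩)
    ∨ (∃ (e : G.edgeSet) (i j : Fin (2 * k e)), (j : ℕ) = (i : ℕ) + 1 ∧
        a = Sum.inr ⟨e, i⟩ ∧ b = Sum.inr ⟨e, j⟩)
    ∨ (∃ (e : G.edgeSet) (i : Fin (2 * k e)), (i : ℕ) = 2 * k e - 1 ∧
        a = Sum.inr ⟨e, i⟩ ∧ b = Sum.inl (snd e))


lemma fin_nocons_card {n : ℕ} (A : Finset (Fin n))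
    (h : ∀ i ∈ A, ∀ j ∈ A, (j : ℕ) = (i : ℕ) + 1 → False) :
    A.card ≤ (n + 1) / 2 := by
  classical
  have := Finset.card_le_card_of_injOn (f := fun i : Fin n => (i : ℕ) / 2)
    (t := Finset.range ((n + 1) / 2))
    (fun i hi => by
      have := i.isLt
      simp only [Finset.mem_coe, Finset.mem_range]
      omega)
    (fun i hi j hj hij => by
      have hij' : (i : ℕ) / 2 = (j : ℕ) / 2 := hij
      by_contra hne
      have hne' : (i : ℕ) ≠ (j : ℕ) := fun hc => hne (Fin.ext hc)
      have : (j : ℕ) = (i : ℕ) + 1 ∨ (i : ℕ) = (j : ℕ) + 1 := by omega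
      rcases this with h' | h'
      · exact h i hi j hj h'
      · exact h j hj i hi h')
  simpa using this

lemma fin_nocons_card' {m : ℕ} (hm : 1 ≤ m) (A : Finset (Fin (2 * m)))
    (h : ∀ i ∈ A, ∀ j ∈ A, (j : ℕ) = (i : ℕ) + 1 → False)
    (h0 : ∀ i ∈ A, (i : ℕ) ≠ 0) (hl : ∀ i ∈ A, (i : ℕ) ≠ 2 * m - 1) :
    A.card + 1 ≤ m := by
  classical
  have hc := Finset.card_le_card_of_injOn (f := fun i : Fin (2 * m) => ((i : ℕ) - 1) / 2)
    (t := Finset.range (m - 1))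
    (fun i hi => by
      have h1 := i.isLt
      have h2 := h0 i hi
      have h3 := hl i hi
      simp only [Finset.mem_coe, Finset.mem_range]
      omega)
    (fun i hi j hj hij => by
      have hij' : ((i : ℕ) - 1) / 2 = ((j : ℕ) - 1) / 2 := hij
      by_contra hne
      have hne' : (i : ℕ) ≠ (j : ℕ) := fun hc => hne (Fin.ext hc)
      have hi0 := h0 i hi
      have hj0 := h0 j hj
      have : (j : ℕ) = (i : ℕ) + 1 ∨ (i : ℕ) = (j : ℕ) + 1 := by omega
      rcases this with h' | h'
      · exact h i hi j hj h'
      · exact h j hj i hi h')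
  simp only [Finset.card_range] at hc
  omega

lemma card_parity (m c : ℕ) (hc : c < 2) :
    (Finset.univ.filter fun i : Fin (2 * m) => (i : ℕ) % 2 = c).card = m := by
  classical
  have key : (Finset.univ.filter fun i : Fin (2 * m) => (i : ℕ) % 2 = c).card
      = (Finset.univ : Finset (Fin m)).card := by
    refine Finset.card_bij'
      (fun i _ => (⟨(i : ℕ) / 2, by have := i.isLt; omega⟩ : Fin m))
      (fun j _ => (⟨2 * (j : ℕ) + c, by have := j.isLt; omega⟩ : Fin (2 * m)))
      (fun a ha => Finset.mem_univ _) ?_ ?_ ?_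
    · intro a ha
      simp only [Finset.mem_filter, Finset.mem_univ, true_and]
      omega
    · intro a ha
      simp only [Finset.mem_filter, Finset.mem_univ, true_and] at ha
      apply Fin.ext
      simp only
      omega
    · intro a ha
      apply Fin.ext
      simp only
      omega
  simpa using key

lemma le_indepNum {V : Type*} [Fintype V] (G : SimpleGraph V) (S : Finset V)
    (h : ∀ u ∈ S, ∀ v ∈ S, ¬ G.Adj u v) : S.card ≤ indepNum G := by
  apply Finset.le_sup (f := Finset.card)
  simp only [Finset.mem_filter, Finset.mem_univ, true_and]
  exact h

lemma indepNum_le {V : Type*} [Fintype V] (G : SimpleGraph V) (n : ℕ)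
    (h : ∀ S : Finset V, (∀ u ∈ S, ∀ v ∈ S, ¬ G.Adj u v) → S.card ≤ n) :
    indepNum G ≤ n := by
  apply Finset.sup_le
  intro S hS
  rw [Finset.mem_filter] at hS
  exact h S hS.2

lemma exists_indep {V : Type*} [Fintype V] (G : SimpleGraph V) :
    ∃ S : Finset V, (∀ u ∈ S, ∀ v ∈ S, ¬ G.Adj u v) ∧ S.card = indepNum G := by
  obtain ⟨S, hS, hcard⟩ := Finset.exists_mem_eq_sup
    (Finset.univ.filter fun S : Finset V => ∀ u ∈ S, ∀ v ∈ S, ¬ G.Adj u v)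
    ⟨∅, by simp⟩ Finset.card
  rw [Finset.mem_filter] at hS
  exact ⟨S, hS.2, hcard.symm⟩

section
variable {V : Type*} {G : SimpleGraph V} {k : Sym2 V → ℕ} {fst snd : G.edgeSet → V}

lemma es_not_adj_inl_inl (u v : V) :
    ¬ (evenSubdivision G k fst snd).Adj (Sum.inl u) (Sum.inl v) := by
  rw [evenSubdivision, SimpleGraph.fromRel_adj]
  rintro ⟨hne, h | h⟩ <;>
    rcases h with ⟨e,i,hh,h1,h2⟩|⟨e,i,j,hh,h1,h2⟩|⟨e,i,hh,h1,h2⟩ <;> simp_all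

lemma es_adj_inl_inr (u : V) (e : G.edgeSet) (i : Fin (2 * k e)) :
    (evenSubdivision G k fst snd).Adj (Sum.inl u) (Sum.inr ⟨e, i⟩) ↔
      (u = fst e ∧ (i : ℕ) = 0) ∨ (u = snd e ∧ (i : ℕ) = 2 * k ↑e - 1) := by
  rw [evenSubdivision, SimpleGraph.fromRel_adj]
  simp only [Sum.inl.injEq, Sum.inr.injEq, Sigma.mk.inj_iff, reduceCtorEq, false_and, and_false,
    exists_false, false_or, or_false, ne_eq, not_false_eq_true, true_and]
  constructor
  · rintro (⟨e', i', h0, rfl, rfl, h⟩ | ⟨e', i', h0, ⟨rfl, h⟩, rfl⟩)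
    · cases eq_of_heq h
      exact Or.inl ⟨rfl, h0⟩
    · cases eq_of_heq h
      exact Or.inr ⟨rfl, h0⟩
  · rintro (⟨rfl, h0⟩ | ⟨rfl, h0⟩)
    · exact Or.inl ⟨e, i, h0, rfl, rfl, HEq.rfl⟩
    · exact Or.inr ⟨e, i, h0, ⟨rfl, HEq.rfl⟩, rfl⟩

lemma es_adj_inr_eq (e e' : G.edgeSet) (i : Fin (2 * k e)) (j : Fin (2 * k e')) :
    (evenSubdivision G k fst snd).Adj (Sum.inr ⟨e, i⟩) (Sum.inr ⟨e', j⟩) → e = e' := by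
  rw [evenSubdivision, SimpleGraph.fromRel_adj]
  rintro ⟨hne, h | h⟩ <;>
    rcases h with ⟨a,b,hh,h1,h2⟩|⟨a,b,c,hh,h1,h2⟩|⟨a,b,hh,h1,h2⟩ <;>
    simp only [Sum.inr.injEq, Sigma.mk.inj_iff, reduceCtorEq] at h1 h2 <;>
    simp [h1.1, h2.1]

lemma es_adj_inr_inr_same (e : G.edgeSet) (i j : Fin (2 * k e)) :
    (evenSubdivision G k fst snd).Adj (Sum.inr ⟨e, i⟩) (Sum.inr ⟨e, j⟩) ↔
      (j : ℕ) = (i : ℕ) + 1 ∨ (i : ℕ) = (j : ℕ) + 1 := by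
  rw [evenSubdivision, SimpleGraph.fromRel_adj]
  constructor
  · rintro ⟨hne, h | h⟩ <;>
      rcases h with ⟨a,b,hh,h1,h2⟩|⟨a,b,c,hh,h1,h2⟩|⟨a,b,hh,h1,h2⟩ <;>
      simp only [Sum.inr.injEq, Sigma.mk.inj_iff, reduceCtorEq, false_and] at h1 h2
    · obtain ⟨rfl, hb⟩ := h1
      obtain ⟨-, hc⟩ := h2
      cases eq_of_heq hb; cases eq_of_heq hc
      exact Or.inl hh
    · obtain ⟨rfl, hb⟩ := h1
      obtain ⟨-, hc⟩ := h2
      cases eq_of_heq hb; cases eq_of_heq hc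
      exact Or.inr hh
  · rintro (hh | hh)
    · refine ⟨?_, Or.inl (Or.inr (Or.inl ⟨e, i, j, hh, rfl, rfl⟩))⟩
      simp only [ne_eq, Sum.inr.injEq, Sigma.mk.inj_iff, heq_eq_eq, true_and]
      intro hij
      rw [hij] at hh
      omega
    · refine ⟨?_, Or.inr (Or.inr (Or.inl ⟨e, j, i, hh, rfl, rfl⟩))⟩
      simp only [ne_eq, Sum.inr.injEq, Sigma.mk.inj_iff, heq_eq_eq, true_and]
      intro hij
      rw [hij] at hh
      omega

end

lemma surgery {V : Type*} [Fintype V] [DecidableEq V] (G : SimpleGraph V) [DecidableRel G.Adj]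
    (fst snd : G.edgeSet → V)
    (hends : ∀ e : G.edgeSet, (e : Sym2 V) = s(fst e, snd e))
    (S : Finset V) :
    S.card ≤ indepNum G +
      (Finset.univ.filter fun e : G.edgeSet => fst e ∈ S ∧ snd e ∈ S).card := by
  induction S using Finset.strongInductionOn with
  | _ S ih =>
    by_cases hS : ∀ u ∈ S, ∀ v ∈ S, ¬ G.Adj u v
    · have := le_indepNum G S hS
      omega
    · push_neg at hS
      obtain ⟨u, hu, v, hv, huv⟩ := hS
      set e₀ : G.edgeSet := ⟨s(u, v), huv⟩ with he₀
      have hor : (fst e₀ = u ∧ snd e₀ = v) ∨ (fst e₀ = v ∧ snd e₀ = u) := by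
        have h := (hends e₀).symm
        rw [Sym2.eq_iff] at h
        tauto
      have hfs : fst e₀ ∈ S ∧ snd e₀ ∈ S := by
        rcases hor with ⟨h1, h2⟩ | ⟨h1, h2⟩ <;> rw [h1, h2] <;> exact ⟨by assumption, by assumption⟩
      have he₀mem : e₀ ∈ Finset.univ.filter fun e : G.edgeSet => fst e ∈ S ∧ snd e ∈ S := by
        simp [hfs.1, hfs.2]
      have hsub : (Finset.univ.filter fun e : G.edgeSet =>
            fst e ∈ S.erase (fst e₀) ∧ snd e ∈ S.erase (fst e₀)) ⊆
          (Finset.univ.filter fun e : G.edgeSet => fst e ∈ S ∧ snd e ∈ S).erase e₀ := by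
        intro e he
        simp only [Finset.mem_filter, Finset.mem_univ, true_and, Finset.mem_erase] at he ⊢
        refine ⟨?_, he.1.2, he.2.2⟩
        rintro rfl
        exact he.1.1 rfl
      have hcard : (Finset.univ.filter fun e : G.edgeSet =>
            fst e ∈ S.erase (fst e₀) ∧ snd e ∈ S.erase (fst e₀)).card + 1 ≤
          (Finset.univ.filter fun e : G.edgeSet => fst e ∈ S ∧ snd e ∈ S).card := by
        have h1 := Finset.card_le_card hsub
        have h2 := Finset.card_erase_add_one he₀mem
        omega
      have hlt : S.erase (fst e₀) ⊂ S := Finset.erase_ssubset hfs.1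
      have hih := ih _ hlt
      have hce : S.card = (S.erase (fst e₀)).card + 1 := (Finset.card_erase_add_one hfs.1).symm
      omega

lemma card_decomp {V : Type*} [Fintype V] [DecidableEq V] {G : SimpleGraph V} [DecidableRel G.Adj]
    {k : Sym2 V → ℕ} (T : Finset (V ⊕ Σ e : G.edgeSet, Fin (2 * k e))) :
    T.card = (Finset.univ.filter fun v : V => Sum.inl v ∈ T).card +
      ∑ e : G.edgeSet, (Finset.univ.filter fun i : Fin (2 * k e) => Sum.inr ⟨e, i⟩ ∈ T).card := by
  classical
  have h0 : T.card = (Finset.univ.filter fun x => x ∈ T).card := by simp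
  rw [h0, Finset.card_filter, Fintype.sum_sum_type]
  congr 1
  · rw [Finset.card_filter]
  · rw [← Finset.univ_sigma_univ, Finset.sum_sigma]
    exact Finset.sum_congr rfl fun e _ => by rw [Finset.card_filter]

theorem indepNum_evenSubdivision {V : Type*} [Fintype V] [DecidableEq V]
    (G : SimpleGraph V) [DecidableRel G.Adj]
    (k : Sym2 V → ℕ) (hk : ∀ e ∈ G.edgeSet, 1 ≤ k e)
    (fst snd : G.edgeSet → V)
    (hends : ∀ e : G.edgeSet, (e : Sym2 V) = s(fst e, snd e)) :
    indepNum (evenSubdivision G k fst snd) = indepNum G + ∑ e : G.edgeSet, k e := by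
  classical
  have hadjG : ∀ e : G.edgeSet, G.Adj (fst e) (snd e) := fun e => by
    have h := e.2
    rw [hends e] at h
    exact h
  apply le_antisymm
  · -- upper bound
    apply indepNum_le
    intro T hT
    set S : Finset V := Finset.univ.filter fun v : V => Sum.inl v ∈ T with hSdef
    set A : ∀ e : G.edgeSet, Finset (Fin (2 * k e)) :=
      fun e => Finset.univ.filter fun i => Sum.inr ⟨e, i⟩ ∈ T with hAdef
    have hmemS : ∀ v, v ∈ S ↔ Sum.inl v ∈ T := fun v => by simp [hSdef]
    have hmemA : ∀ (e : G.edgeSet) (i : Fin (2 * k e)), i ∈ A e ↔ Sum.inr ⟨e, i⟩ ∈ T :=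
      fun e i => by simp [hAdef]
    have hdecomp : T.card = S.card + ∑ e : G.edgeSet, (A e).card := by
      rw [hSdef, hAdef]
      exact card_decomp T
    have hAcons : ∀ e : G.edgeSet, ∀ i ∈ A e, ∀ j ∈ A e, (j : ℕ) = (i : ℕ) + 1 → False := by
      intro e i hi j hj hji
      exact hT _ ((hmemA e i).mp hi) _ ((hmemA e j).mp hj)
        ((es_adj_inr_inr_same e i j).mpr (Or.inl hji))
    have hA : ∀ e : G.edgeSet, (A e).card ≤ k e := by
      intro e
      have := fin_nocons_card (A e) (hAcons e)
      omega
    have hbad : ∀ e : G.edgeSet, fst e ∈ S → snd e ∈ S → (A e).card + 1 ≤ k e := by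
      intro e h1 h2
      refine fin_nocons_card' (hk e e.2) (A e) (hAcons e) ?_ ?_
      · intro i hi hi0
        exact hT _ ((hmemS _).mp h1) _ ((hmemA e i).mp hi)
          ((es_adj_inl_inr (fst e) e i).mpr (Or.inl ⟨rfl, hi0⟩))
      · intro i hi hil
        exact hT _ ((hmemS _).mp h2) _ ((hmemA e i).mp hi)
          ((es_adj_inl_inr (snd e) e i).mpr (Or.inr ⟨rfl, hil⟩))
    have key : ∑ e : G.edgeSet, (A e).card +
        (Finset.univ.filter fun e : G.edgeSet => fst e ∈ S ∧ snd e ∈ S).card ≤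
        ∑ e : G.edgeSet, k e := by
      rw [Finset.card_filter, ← Finset.sum_add_distrib]
      apply Finset.sum_le_sum
      intro e _
      by_cases hb : fst e ∈ S ∧ snd e ∈ S
      · rw [if_pos hb]
        exact hbad e hb.1 hb.2
      · rw [if_neg hb]
        have := hA e
        omega
    have hsur := surgery G fst snd hends S
    omega
  · -- lower bound
    obtain ⟨S, hSind, hScard⟩ := exists_indep G
    set c : G.edgeSet → ℕ := fun e => if fst e ∈ S then 1 else 0 with hcdef
    have hclt : ∀ e, c e < 2 := fun e => by
      by_cases h : fst e ∈ S <;> simp [hcdef, h]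
    set I : ∀ e : G.edgeSet, Finset (Fin (2 * k e)) :=
      fun e => Finset.univ.filter fun i => (i : ℕ) % 2 = c e with hIdef
    set T : Finset (V ⊕ Σ e : G.edgeSet, Fin (2 * k e)) :=
      S.image Sum.inl ∪ (Finset.univ.sigma I).image Sum.inr with hTdef
    -- key adjacency fact
    have hno : ∀ u ∈ S, ∀ (e : G.edgeSet) (i : Fin (2 * k e)), i ∈ I e →
        ¬ (evenSubdivision G k fst snd).Adj (Sum.inl u) (Sum.inr ⟨e, i⟩) := by
      intro u hu e i hi hadj
      have hpar : (i : ℕ) % 2 = c e := by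
        rw [hIdef] at hi
        simpa using hi
      rcases (es_adj_inl_inr u e i).mp hadj with ⟨rfl, hi0⟩ | ⟨rfl, hil⟩
      · have : c e = 1 := by rw [hcdef]; simp [hu]
        omega
      · have hlt := i.isLt
        have hodd : (i : ℕ) % 2 = 1 := by omega
        have hce : c e = 1 := by omega
        have hfst : fst e ∈ S := by
          rw [hcdef] at hce
          by_contra hns
          simp [hns] at hce
        exact hSind _ hfst _ hu (hadjG e)
    -- independence of T
    have hTind : ∀ x ∈ T, ∀ y ∈ T, ¬ (evenSubdivision G k fst snd).Adj x y := by
      intro x hx y hy hadj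
      rw [hTdef, Finset.mem_union] at hx hy
      have hform : ∀ z, z ∈ S.image Sum.inl ∪ (Finset.univ.sigma I).image Sum.inr →
          (∃ v ∈ S, z = Sum.inl v) ∨
          (∃ (e : G.edgeSet) (i : Fin (2 * k e)), i ∈ I e ∧ z = Sum.inr ⟨e, i⟩) := by
        intro z hz
        rw [Finset.mem_union] at hz
        rcases hz with hz | hz
        · obtain ⟨v, hv, rfl⟩ := Finset.mem_image.mp hz
          exact Or.inl ⟨v, hv, rfl⟩
        · obtain ⟨⟨e, i⟩, hp, rfl⟩ := Finset.mem_image.mp hz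
          rw [Finset.mem_sigma] at hp
          exact Or.inr ⟨e, i, hp.2, rfl⟩
      rcases hform x (Finset.mem_union.mpr hx) with ⟨u, hu, rfl⟩ | ⟨e, i, hi, rfl⟩ <;>
        rcases hform y (Finset.mem_union.mpr hy) with ⟨v, hv, rfl⟩ | ⟨e', j, hj, rfl⟩
      · exact es_not_adj_inl_inl u v hadj
      · exact hno u hu e' j hj hadj
      · exact hno v hv e i hi hadj.symm
      · have heq := es_adj_inr_eq e e' i j hadj
        subst heq
        have h1 : (i : ℕ) % 2 = c e := by rw [hIdef] at hi; simpa using hi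
        have h2 : (j : ℕ) % 2 = c e := by rw [hIdef] at hj; simpa using hj
        rcases (es_adj_inr_inr_same e i j).mp hadj with h | h <;> omega
    -- cardinality of T
    have hdisj : Disjoint (S.image Sum.inl)
        ((Finset.univ.sigma I).image (Sum.inr :
          (Σ e : G.edgeSet, Fin (2 * k e)) → V ⊕ Σ e : G.edgeSet, Fin (2 * k e))) := by
      rw [Finset.disjoint_left]
      rintro a ha hb
      obtain ⟨v, -, rfl⟩ := Finset.mem_image.mp ha
      obtain ⟨p, -, hp⟩ := Finset.mem_image.mp hb
      exact absurd hp (by simp)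
    have hTcard : T.card = indepNum G + ∑ e : G.edgeSet, k e := by
      rw [hTdef, Finset.card_union_of_disjoint hdisj,
        Finset.card_image_of_injective _ Sum.inl_injective,
        Finset.card_image_of_injective _ Sum.inr_injective,
        Finset.card_sigma, hScard]
      congr 1
      exact Finset.sum_congr rfl fun e _ => card_parity (k e) (c e) (hclt e)
    calc indepNum G + ∑ e : G.edgeSet, k e = T.card := hTcard.symm
      _ ≤ indepNum (evenSubdivision G k fst snd) := le_indepNum _ T hTind
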